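/- For every real p > 60184, π(p + p/(log p - 1)) - π(p) ≥ 1, assuming the Dusart bounds π(x) ≤ x/(log x - 1.1) for x ≥ 60184 and π(x) ≥ x/(log x - 1) for x ≥ 5393. -/

import Mathlib

theorem pi_gap_ge_one_of_dusart
    (hupper : ∀ x : ℝ, 60184 ≤ x → (Nat.primeCounting ⌊x⌋₊ : ℝ) ≤ x / (Real.log x - 1.1))
    (hlower : ∀ x : ℝ, 5393 ≤ x → x / (Real.log x - 1) ≤ (Nat.primeCounting ⌊x⌋₊ : ℝ))
    (p : ℝ) (hp : 60184 < p) :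
    1 ≤ (Nat.primeCounting ⌊p + p / (Real.log p - 1)⌋₊ : ℝ) - (Nat.primeCounting ⌊p⌋₊ : ℝ) := by
  have hp0 : (0:ℝ) < p := by linarith
  set L : ℝ := Real.log p with hLdef
  -- L ≥ 11
  have hexp11 : Real.exp 11 ≤ 60000 := by
    have h1 : Real.exp 11 = (Real.exp 1) ^ (11:ℕ) := by
      rw [← Real.exp_nat_mul]; norm_num
    have h2 : (Real.exp 1) ^ (11:ℕ) ≤ (2.7182818286:ℝ) ^ (11:ℕ) :=
      pow_le_pow_left₀ (Real.exp_pos 1).le Real.exp_one_lt_d9.le 11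
    have h3 : (2.7182818286:ℝ) ^ (11:ℕ) ≤ 60000 := by norm_num
    linarith
  have hL11 : (11:ℝ) ≤ L := by
    rw [hLdef, Real.le_log_iff_exp_le hp0]
    linarith
  have hL1 : (10:ℝ) ≤ L - 1 := by linarith
  have hL1pos : (0:ℝ) < L - 1 := by linarith
  set y : ℝ := p + p / (L - 1) with hydef
  have hy : y = p * L / (L - 1) := by
    rw [hydef, eq_div_iff hL1pos.ne', add_mul, div_mul_cancel₀ _ hL1pos.ne']; ring
  have hypos : 0 < y := by
    have : 0 < p / (L - 1) := div_pos hp0 hL1pos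
    rw [hydef]; linarith
  have hy5393 : (5393:ℝ) ≤ y := by
    have : 0 < p / (L - 1) := div_pos hp0 hL1pos
    rw [hydef]; linarith
  -- log y ≤ L + 1/(L-1)
  have hlogy_le : Real.log y ≤ L + 1 / (L - 1) := by
    have hfrac : (0:ℝ) < L / (L - 1) := div_pos (by linarith) hL1pos
    have h1 : Real.log y = L + Real.log (L / (L - 1)) := by
      rw [hy, mul_div_assoc, Real.log_mul hp0.ne' hfrac.ne']
    have h2 : Real.log (L / (L - 1)) ≤ L / (L - 1) - 1 :=
      Real.log_le_sub_one_of_pos hfrac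
    have h3 : L / (L - 1) - 1 = 1 / (L - 1) := by
      field_simp
      ring
    linarith
  -- log y ≥ L
  have hlogy_ge : L ≤ Real.log y := by
    rw [hLdef]
    apply Real.log_le_log hp0
    have : 0 < p / (L - 1) := div_pos hp0 hL1pos
    rw [hydef]; linarith
  have hlogy1pos : (0:ℝ) < Real.log y - 1 := by linarith
  set D : ℝ := L - 1 + 1 / (L - 1) with hDdef
  have hDle : Real.log y - 1 ≤ D := by rw [hDdef]; linarith
  have hstep : y / D ≤ y / (Real.log y - 1) :=
    div_le_div_of_nonneg_left hypos.le hlogy1pos hDle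
  have hlow := hlower y hy5393
  have hup := hupper p (by linarith)
  -- y / D = p * L / ((L-1)^2 + 1)
  have hyD : y / D = p * L / ((L - 1) ^ 2 + 1) := by
    rw [hy, hDdef]
    have h1 : ((L-1)^2 + 1) > 0 := by positivity
    field_simp
  -- key polynomial inequality
  have hkey : 1 ≤ p * L / ((L - 1) ^ 2 + 1) - p / (L - 1.1) := by
    have hden1 : (0:ℝ) < (L - 1) ^ 2 + 1 := by positivity
    have hden2 : (0:ℝ) < L - 1.1 := by linarith
    have hpexp : (1 + L/4)^4 ≤ p := by
      have h1 : Real.exp (L/4) ^ (4:ℕ) = Real.exp L := by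
        rw [← Real.exp_nat_mul]; congr 1; ring
      have h2 : (1 + L/4) ^ (4:ℕ) ≤ Real.exp (L/4) ^ (4:ℕ) := by
        apply pow_le_pow_left₀ (by linarith)
        have := Real.add_one_le_exp (L/4)
        linarith
      rw [h1, hLdef, Real.exp_log hp0] at h2
      exact h2
    have hpoly : ((L - 1) ^ 2 + 1) * (L - 1.1) ≤ (1 + L/4)^4 * (0.9 * L - 2) := by
      nlinarith [sq_nonneg (L - 11), sq_nonneg ((L-11)^2), sq_nonneg ((L-11)*(L-5)),
        mul_nonneg (mul_nonneg (by linarith : (0:ℝ) ≤ L - 11) (by linarith : (0:ℝ) ≤ L - 11)) (by linarith : (0:ℝ) ≤ L - 11)]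
    have hmul : ((L - 1) ^ 2 + 1) * (L - 1.1) ≤ p * (0.9 * L - 2) := by
      have h09 : (0:ℝ) ≤ 0.9 * L - 2 := by linarith
      nlinarith
    have hA : p * (0.9 * L - 2) / (((L - 1) ^ 2 + 1) * (L - 1.1))
        = p * L / ((L - 1) ^ 2 + 1) - p / (L - 1.1) := by
      field_simp
      ring
    rw [← hA, le_div_iff₀ (by positivity)]
    linarith [hmul]
  calc (1:ℝ) ≤ p * L / ((L - 1) ^ 2 + 1) - p / (L - 1.1) := hkey
    _ = y / D - p / (L - 1.1) := by rw [hyD]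
    _ ≤ y / (Real.log y - 1) - p / (L - 1.1) := by linarith
    _ ≤ (Nat.primeCounting ⌊y⌋₊ : ℝ) - (Nat.primeCounting ⌊p⌋₊ : ℝ) := by
        have hup' : (Nat.primeCounting ⌊p⌋₊ : ℝ) ≤ p / (L - 1.1) := hup
        linarith
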